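/- The map Φ from the free quandle FQ(S) on a set S to the conjugation quandle Conj(F(S)) of the free group F(S), sending the class of a^w (a ∈ S, w ∈ F(S)) to w⁻¹ a w, is an injective quandle homomorphism. -/

import Mathlib

open Quandles

/-- The free rack on a set `S`: pairs `(a, w)` (thought of as the conjugate
`w a w⁻¹` of the generator `a`), following Fenn–Rourke. -/
def FreeRack (S : Type u) : Type u := S × FreeGroup S

namespace FreeRack

variable {S : Type u}

/-- The element of the free group represented by the pair `(a, w)`,
namely the conjugate `w a w⁻¹` of the generator `a`. -/
def toGroup (x : FreeRack S) : FreeGroup S := x.2 * FreeGroup.of x.1 * x.2⁻¹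

instance : Rack (FreeRack S) where
  act x y := (y.1, toGroup x * y.2)
  self_distrib := by
    rintro ⟨a, w⟩ ⟨b, u⟩ ⟨c, v⟩
    refine Prod.ext rfl ?_
    show toGroup (a, w) * (toGroup (b, u) * v)
        = toGroup (b, toGroup (a, w) * u) * (toGroup (a, w) * v)
    simp only [toGroup]
    group
  invAct x y := (y.1, (toGroup x)⁻¹ * y.2)
  left_inv x y := by
    refine Prod.ext rfl ?_
    show (toGroup x)⁻¹ * (toGroup x * y.2) = y.2
    group
  right_inv x y := by
    refine Prod.ext rfl ?_
    show toGroup x * ((toGroup x)⁻¹ * y.2) = y.2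
    group

/-- The defining relation of the free quandle as a quotient of the free rack:
`(a, w) ~ (a, w · a)`. -/
def rel (p q : FreeRack S) : Prop := q = (p.1, p.2 * FreeGroup.of p.1)

theorem toGroup_of_rel {p q : FreeRack S} (h : rel p q) : toGroup p = toGroup q := by
  subst h
  rcases p with ⟨a, w⟩
  simp only [toGroup]
  group

theorem toGroup_of_eqvGen {p q : FreeRack S} (h : Relation.EqvGen rel p q) :
    toGroup p = toGroup q := by
  induction h with
  | rel a b hab => exact toGroup_of_rel hab
  | refl a => rfl
  | symm a b _ ih => exact ih.symm
  | trans a b c _ _ ih1 ih2 => exact ih1.trans ih2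

theorem fst_of_eqvGen {p q : FreeRack S} (h : Relation.EqvGen rel p q) : p.1 = q.1 := by
  induction h with
  | rel a b hab => rw [hab]
  | refl a => rfl
  | symm a b _ ih => exact ih.symm
  | trans a b c _ _ ih1 ih2 => exact ih1.trans ih2

/-- The setoid generated by the relation `(a, w) ~ (a, w · a)`. -/
instance setoid (S : Type u) : Setoid (FreeRack S) :=
  ⟨Relation.EqvGen rel, Relation.EqvGen.is_equivalence rel⟩

theorem act_eqvGen_right (p : FreeRack S) {q q' : FreeRack S}
    (h : Relation.EqvGen rel q q') : Relation.EqvGen rel (p ◃ q) (p ◃ q') := by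
  induction h with
  | rel a b hab =>
      refine Relation.EqvGen.rel _ _ ?_
      rw [hab]
      refine Prod.ext rfl ?_
      show toGroup p * (a.2 * FreeGroup.of a.1) = toGroup p * a.2 * FreeGroup.of a.1
      group
  | refl a => exact Relation.EqvGen.refl _
  | symm a b _ ih => exact Relation.EqvGen.symm _ _ ih
  | trans a b c _ _ ih1 ih2 => exact Relation.EqvGen.trans _ _ _ ih1 ih2

theorem act_eq_of_eqvGen_left {p p' : FreeRack S} (q : FreeRack S)
    (h : Relation.EqvGen rel p p') : p ◃ q = p' ◃ q := by
  show (q.1, toGroup p * q.2) = (q.1, toGroup p' * q.2)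
  rw [toGroup_of_eqvGen h]

theorem invAct_eqvGen_right (p : FreeRack S) {q q' : FreeRack S}
    (h : Relation.EqvGen rel q q') : Relation.EqvGen rel (p ◃⁻¹ q) (p ◃⁻¹ q') := by
  induction h with
  | rel a b hab =>
      refine Relation.EqvGen.rel _ _ ?_
      rw [hab]
      refine Prod.ext rfl ?_
      show (toGroup p)⁻¹ * (a.2 * FreeGroup.of a.1) = (toGroup p)⁻¹ * a.2 * FreeGroup.of a.1
      group
  | refl a => exact Relation.EqvGen.refl _
  | symm a b _ ih => exact Relation.EqvGen.symm _ _ ih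
  | trans a b c _ _ ih1 ih2 => exact Relation.EqvGen.trans _ _ _ ih1 ih2

theorem invAct_eq_of_eqvGen_left {p p' : FreeRack S} (q : FreeRack S)
    (h : Relation.EqvGen rel p p') : p ◃⁻¹ q = p' ◃⁻¹ q := by
  show (q.1, (toGroup p)⁻¹ * q.2) = (q.1, (toGroup p')⁻¹ * q.2)
  rw [toGroup_of_eqvGen h]

end FreeRack

/-- The free quandle on a set `S`: the quotient of the free rack on `S` by the
equivalence relation generated by `(a, w) ~ (a, w · a)`. -/
def FreeQuandle (S : Type u) : Type u := Quotient (FreeRack.setoid S)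

namespace FreeQuandle

variable {S : Type u}

instance : Quandle (FreeQuandle S) where
  act := Quotient.map₂ Shelf.act (by
    intro p p' hp q q' hq
    calc Shelf.act p q = Shelf.act p' q := FreeRack.act_eq_of_eqvGen_left q hp
    _ ≈ Shelf.act p' q' := FreeRack.act_eqvGen_right p' hq)
  self_distrib := by
    intro x y z
    refine Quotient.inductionOn₃ x y z (fun p q r => ?_)
    exact congrArg (Quotient.mk _) Shelf.self_distrib
  invAct := Quotient.map₂ Rack.invAct (by
    intro p p' hp q q' hq
    calc Rack.invAct p q = Rack.invAct p' q := FreeRack.invAct_eq_of_eqvGen_left q hp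
    _ ≈ Rack.invAct p' q' := FreeRack.invAct_eqvGen_right p' hq)
  left_inv := by
    intro x y
    refine Quotient.inductionOn₂ x y (fun p q => ?_)
    exact congrArg (Quotient.mk _) (Rack.left_inv p q)
  right_inv := by
    intro x y
    refine Quotient.inductionOn₂ x y (fun p q => ?_)
    exact congrArg (Quotient.mk _) (Rack.right_inv p q)
  fix := by
    intro x
    refine Quotient.inductionOn x (fun p => ?_)
    refine Quotient.sound ?_
    refine Relation.EqvGen.trans _ _ _ (Relation.EqvGen.refl _) ?_
    have h : p ◃ p = (p.1, p.2 * FreeGroup.of p.1) := by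
      refine Prod.ext rfl ?_
      show FreeRack.toGroup p * p.2 = p.2 * FreeGroup.of p.1
      simp only [FreeRack.toGroup]
      group
    rw [h]
    exact Relation.EqvGen.symm _ _ (Relation.EqvGen.rel _ _ rfl)

/-- The canonical inclusion of the generating set into the free quandle. -/
def of (a : S) : FreeQuandle S := Quotient.mk _ (a, 1)

/-- The natural map from the free quandle on `S` into the conjugation quandle
of the free group on `S`, sending the class of `(a, w)` to the conjugate
`w a w⁻¹` of the generator `a`. -/
def toConj : FreeQuandle S → Quandle.Conj (FreeGroup S) :=
  Quotient.lift FreeRack.toGroup (fun _ _ h => FreeRack.toGroup_of_eqvGen h)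

end FreeQuandle


namespace FreeQuandleAux
open FreeGroup

variable {S : Type} [DecidableEq S]

lemma reduce_tail {x : S × Bool} {L : List (S × Bool)}
    (h : reduce (x :: L) = x :: L) : reduce L = L := by
  rw [reduce.cons] at h
  rcases hL : reduce L with _ | ⟨hd, tl⟩
  · rw [hL] at h
    simp only [List.cons.injEq] at h
    exact h.2.symm ▸ rfl
  · rw [hL] at h
    change (if x.1 = hd.1 ∧ x.2 = !hd.2 then tl else x :: hd :: tl) = x :: L at h
    by_cases hc : x.1 = hd.1 ∧ x.2 = !hd.2
    · rw [if_pos hc] at h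
      exfalso
      have hlen : (reduce L).length ≤ L.length := (reduce.red (L := L)).length_le
      rw [hL] at hlen
      rw [h] at hlen
      simp only [List.length_cons] at hlen
      omega
    · rw [if_neg hc] at h
      simp only [List.cons.injEq] at h
      exact h.2

lemma reduce_cons_of_reduced {x : S × Bool} {L : List (S × Bool)} (hL : reduce L = L)
    (hx : ∀ hd tl, L = hd :: tl → ¬(x.1 = hd.1 ∧ x.2 = !hd.2)) :
    reduce (x :: L) = x :: L := by
  rw [reduce.cons, hL]
  cases L with
  | nil => rfl
  | cons hd tl => exact if_neg (hx hd tl rfl)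

lemma centralizer_aux (a : S) : ∀ (N : ℕ) (g : FreeGroup S), g.toWord.length ≤ N →
    g * of a = of a * g → ∃ n : ℤ, g = of a ^ n := by
  intro N
  induction N with
  | zero =>
    intro g hlen _
    refine ⟨0, ?_⟩
    rw [zpow_zero, ← toWord_eq_nil_iff, List.length_eq_zero_iff.mp (Nat.le_zero.mp hlen)]
  | succ N ih =>
    intro g hlen hcomm
    rcases hW : g.toWord with _ | ⟨⟨b, t⟩, L⟩
    · exact ⟨0, by rw [zpow_zero, ← toWord_eq_nil_iff, hW]⟩
    have hg : g = mk ((b, t) :: L) := by rw [← hW, mk_toWord]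
    have hred : reduce ((b, t) :: L) = (b, t) :: L := by rw [← hW]; exact reduce_toWord g
    have hlen' : L.length ≤ N := by
      have : L.length + 1 ≤ N + 1 := by simpa [hW] using hlen
      omega
    by_cases hba : b = a
    · subst hba
      cases t with
      | false =>
        have hW' : (of b * g).toWord = L := by
          rw [hg, show (of b : FreeGroup S) = mk [(b, true)] from rfl, mul_mk, toWord_mk]
          show reduce ((b, true) :: (b, false) :: L) = L
          rw [reduce.cons, hred]
          exact if_pos ⟨rfl, rfl⟩
        have hcomm' : (of b * g) * of b = of b * (of b * g) := by
          rw [mul_assoc, hcomm]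
        obtain ⟨n, hn⟩ := ih (of b * g) (by rw [hW']; exact hlen') hcomm'
        refine ⟨n - 1, ?_⟩
        have hgeq : g = (of b)⁻¹ * (of b * g) := by group
        rw [hgeq, hn, zpow_sub_one]
        group
      | true =>
        have hinv : ((of b)⁻¹ : FreeGroup S) = mk [(b, false)] := by
          rw [show (of b : FreeGroup S) = mk [(b, true)] from rfl, inv_mk]
          rfl
        have hW' : ((of b)⁻¹ * g).toWord = L := by
          rw [hg, hinv, mul_mk, toWord_mk]
          show reduce ((b, false) :: (b, true) :: L) = L
          rw [reduce.cons, hred]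
          exact if_pos ⟨rfl, rfl⟩
        have hcomm' : ((of b)⁻¹ * g) * of b = of b * ((of b)⁻¹ * g) := by
          rw [mul_assoc, hcomm]
          group
        obtain ⟨n, hn⟩ := ih ((of b)⁻¹ * g) (by rw [hW']; exact hlen') hcomm'
        refine ⟨n + 1, ?_⟩
        have hgeq : g = of b * ((of b)⁻¹ * g) := by group
        rw [hgeq, hn, zpow_add_one]
        group
    · exfalso
      have h1 : (of a * g).toWord = (a, true) :: (b, t) :: L := by
        rw [hg, show (of a : FreeGroup S) = mk [(a, true)] from rfl, mul_mk, toWord_mk]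
        exact reduce_cons_of_reduced hred (by
          rintro hd tl h
          simp only [List.append_eq, List.nil_append, List.cons.injEq] at h
          intro hc
          exact hba ((congrArg Prod.fst h.1).trans hc.1.symm))
      have h2 : List.Sublist ((g * of a).toWord) ((b, t) :: L ++ [(a, true)]) := by
        have := toWord_mul_sublist g (of a)
        rwa [hW, toWord_of] at this
      rw [hcomm, h1] at h2
      have hlen2 : ((a, true) :: (b, t) :: L).length = ((b, t) :: L ++ [(a, true)]).length := by
        simp
      have heq : (a, true) :: (b, t) :: L = (b, t) :: L ++ [(a, true)] :=
        List.Sublist.eq_of_length h2 hlen2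
      have hhd : (a, true) = (b, t) := by
        have := congrArg (fun l => l.head?) heq
        simpa using this
      exact hba (show b = a from (congrArg Prod.fst hhd).symm)

lemma commute_with_of {a : S} {g : FreeGroup S} (h : g * of a = of a * g) :
    ∃ n : ℤ, g = of a ^ n :=
  centralizer_aux a g.toWord.length g le_rfl h

lemma eqv_mul_zpow {S : Type} (a : S) (u : FreeGroup S) (n : ℤ) :
    Relation.EqvGen FreeRack.rel (a, u) (a, u * FreeGroup.of a ^ n) := by
  induction n using Int.induction_on with
  | zero => rw [zpow_zero, mul_one]; exact Relation.EqvGen.refl _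
  | succ k ih =>
    refine Relation.EqvGen.trans _ _ _ ih (Relation.EqvGen.rel _ _ ?_)
    refine Prod.ext rfl ?_
    show u * FreeGroup.of a ^ ((k : ℤ) + 1) = u * FreeGroup.of a ^ (k : ℤ) * FreeGroup.of a
    group
  | pred k ih =>
    refine Relation.EqvGen.trans _ _ _ ih
      (Relation.EqvGen.symm _ _ (Relation.EqvGen.rel _ _ ?_))
    refine Prod.ext rfl ?_
    show u * FreeGroup.of a ^ (-(k : ℤ)) = u * FreeGroup.of a ^ (-(k : ℤ) - 1) * FreeGroup.of a
    group

end FreeQuandleAux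

/-- The map `Φ : FQ(S) → Conj(F(S))`, sending the class of `(a, w)` to the
conjugate of the generator `a` by `w`, is an injective quandle homomorphism. -/
theorem freeQuandle_toConj_injective_hom (S : Type) :
    Function.Injective (FreeQuandle.toConj : FreeQuandle S → Quandle.Conj (FreeGroup S)) ∧
    (∀ x y : FreeQuandle S,
      FreeQuandle.toConj (x ◃ y) = FreeQuandle.toConj x ◃ FreeQuandle.toConj y) ∧
    (∀ (a : S) (w : FreeGroup S),
      FreeQuandle.toConj (Quotient.mk (FreeRack.setoid S) (a, w))
        = w * FreeGroup.of a * w⁻¹) := by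
  classical
  refine ⟨?_, ?_, ?_⟩
  · intro x y h
    induction x using Quotient.inductionOn with
    | h p =>
    induction y using Quotient.inductionOn with
    | h q =>
    obtain ⟨a, w⟩ := p
    obtain ⟨b, u⟩ := q
    have h' : w * FreeGroup.of a * w⁻¹ = u * FreeGroup.of b * u⁻¹ := h
    have hab : b = a := by
      by_contra hba
      have hφ := congrArg (FreeGroup.lift fun s : S =>
        Multiplicative.ofAdd (if s = a then (1 : ℤ) else 0)) h'
      simp only [map_mul, map_inv, FreeGroup.lift_apply_of] at hφ
      rw [mul_inv_cancel_comm, mul_inv_cancel_comm] at hφ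
      have := congrArg Multiplicative.toAdd hφ
      simp [hba] at this
    subst hab
    have hc : (u⁻¹ * w) * FreeGroup.of b = FreeGroup.of b * (u⁻¹ * w) := by
      calc (u⁻¹ * w) * FreeGroup.of b = u⁻¹ * (w * FreeGroup.of b * w⁻¹) * w := by group
      _ = u⁻¹ * (u * FreeGroup.of b * u⁻¹) * w := by rw [h']
      _ = FreeGroup.of b * (u⁻¹ * w) := by group
    obtain ⟨n, hn⟩ := FreeQuandleAux.commute_with_of hc
    have hw : w = u * FreeGroup.of b ^ n := by rw [← hn]; group
    refine Quotient.sound ?_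
    rw [hw]
    exact Relation.EqvGen.symm _ _ (FreeQuandleAux.eqv_mul_zpow b u n)
  · intro x y
    induction x using Quotient.inductionOn with
    | h p =>
    induction y using Quotient.inductionOn with
    | h q =>
    rw [Quandle.conj_act_eq_conj]
    show FreeRack.toGroup (q.1, FreeRack.toGroup p * q.2)
      = FreeRack.toGroup p * FreeRack.toGroup q * (FreeRack.toGroup p)⁻¹
    simp only [FreeRack.toGroup]
    group
  · intro a w
    rfl
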